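/- arXiv:2102.12761 — 4 statements merged into one kernel-verified Lean document; each statement's English description precedes it below -/
import Mathlib

section
/- Let q ∈ (0,1) and s ∈ [0,1]. The series Σ_{k=0}^∞ ζ_{q,s}(k) = Σ_{k=0}^∞ (1−q²)·q^k·√s / √(1 − s·q^{2(k+1)}) is summable, and its sum satisfies Σ_{k=0}^∞ ζ_{q,s}(k) ≤ −((1−q²)/(q·ln q)) · arcsin(√s). -/
/-- The function `ζ_{q,s}(x) := (1−q²)·q^x·√s / √(1 − s·q^{2(x+1)})`
(with `q ^ x` the real power). -/
noncomputable def zeta (q s x : ℝ) : ℝ :=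
  (1 - q ^ 2) * q ^ x * Real.sqrt s / Real.sqrt (1 - s * q ^ (2 * (x + 1)))

/-- For `q ∈ (0,1)` and `s ∈ [0,1]`, the series `Σ_{k=0}^∞ ζ_{q,s}(k)` is summable and its
sum is at most `−((1−q²)/(q·ln q)) · arcsin(√s)`. -/
theorem stmt6 (q s : ℝ) (hq : q ∈ Set.Ioo (0 : ℝ) 1) (hs : s ∈ Set.Icc (0 : ℝ) 1) :
    Summable (fun k : ℕ => zeta q s k) ∧
    ∑' k : ℕ, zeta q s k ≤ -((1 - q ^ 2) / (q * Real.log q)) * Real.arcsin (Real.sqrt s) := by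
  obtain ⟨hq0, hq1⟩ := hq
  obtain ⟨hs0, hs1⟩ := hs
  have hlogq : Real.log q < 0 := Real.log_neg hq0 hq1
  have hq2 : q ^ 2 ≤ 1 := by nlinarith
  have hss : Real.sqrt s ≤ 1 := by
    rw [show (1 : ℝ) = Real.sqrt 1 from Real.sqrt_one.symm]
    exact Real.sqrt_le_sqrt hs1
  set C : ℝ := -((1 - q ^ 2) / (q * Real.log q)) with hC
  have hCpos : 0 ≤ C := by
    rw [hC, neg_nonneg]
    exact div_nonpos_of_nonneg_of_nonpos (by nlinarith)
      (mul_nonpos_of_nonneg_of_nonpos hq0.le hlogq.le)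
  set F : ℝ → ℝ := fun x => C * Real.arcsin (Real.sqrt s * q ^ x) with hF
  -- basic positivity of the denominator for x > -1
  have hden : ∀ x : ℝ, -1 < x → s * q ^ (2 * (x + 1)) < 1 := by
    intro x hx
    calc s * q ^ (2 * (x + 1)) ≤ 1 * q ^ (2 * (x + 1)) := by
          have := Real.rpow_nonneg hq0.le (2 * (x + 1))
          exact mul_le_mul_of_nonneg_right hs1 this
      _ = q ^ (2 * (x + 1)) := one_mul _
      _ < 1 := Real.rpow_lt_one hq0.le hq1 (by linarith)
  -- nonnegativity of zeta
  have hzeta_nonneg : ∀ x : ℝ, 0 ≤ zeta q s x := by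
    intro x
    unfold zeta
    apply div_nonneg _ (Real.sqrt_nonneg _)
    exact mul_nonneg (mul_nonneg (by nlinarith) (Real.rpow_nonneg hq0.le x))
      (Real.sqrt_nonneg s)
  -- zeta is antitone on (-1, ∞)
  have hanti : ∀ a b : ℝ, -1 < a → a ≤ b → zeta q s b ≤ zeta q s a := by
    intro a b ha hab
    unfold zeta
    have hnumab : (1 - q ^ 2) * q ^ b * Real.sqrt s ≤ (1 - q ^ 2) * q ^ a * Real.sqrt s := by
      have := Real.rpow_le_rpow_of_exponent_ge hq0 hq1.le hab
      have h1 : (0:ℝ) ≤ 1 - q ^ 2 := by nlinarith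
      exact mul_le_mul_of_nonneg_right (mul_le_mul_of_nonneg_left this h1) (Real.sqrt_nonneg s)
    have hdle : Real.sqrt (1 - s * q ^ (2 * (a + 1))) ≤ Real.sqrt (1 - s * q ^ (2 * (b + 1))) := by
      apply Real.sqrt_le_sqrt
      have := Real.rpow_le_rpow_of_exponent_ge hq0 hq1.le (by linarith : 2 * (a+1) ≤ 2 * (b+1))
      nlinarith [mul_le_mul_of_nonneg_left this hs0]
    have hdpos : 0 < Real.sqrt (1 - s * q ^ (2 * (a + 1))) :=
      Real.sqrt_pos.mpr (by linarith [hden a ha])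
    exact div_le_div₀ (mul_nonneg (mul_nonneg (by nlinarith) (Real.rpow_nonneg hq0.le a))
      (Real.sqrt_nonneg s)) hnumab hdpos hdle
  -- derivative of F at x > 0
  have hderiv : ∀ x : ℝ, 0 < x → HasDerivAt F (-(zeta q s (x - 1))) x := by
    intro x hx
    have harg_lt : Real.sqrt s * q ^ x < 1 := by
      calc Real.sqrt s * q ^ x ≤ 1 * q ^ x :=
            mul_le_mul_of_nonneg_right hss (Real.rpow_nonneg hq0.le x)
        _ = q ^ x := one_mul _
        _ < 1 := Real.rpow_lt_one hq0.le hq1 hx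
    have harg_nonneg : 0 ≤ Real.sqrt s * q ^ x :=
      mul_nonneg (Real.sqrt_nonneg s) (Real.rpow_nonneg hq0.le x)
    have hg : HasDerivAt (fun y => Real.sqrt s * q ^ y) (Real.sqrt s * (q ^ x * Real.log q)) x :=
      ((Real.hasStrictDerivAt_const_rpow hq0 x).hasDerivAt).const_mul _
    have harcsin : HasDerivAt (fun y => Real.arcsin (Real.sqrt s * q ^ y))
        (1 / Real.sqrt (1 - (Real.sqrt s * q ^ x) ^ 2) * (Real.sqrt s * (q ^ x * Real.log q))) x :=
      by
        have h1 := Real.hasDerivAt_arcsin (ne_of_gt (by linarith : -1 < Real.sqrt s * q ^ x)) (ne_of_lt harg_lt)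
        have h2 := h1.comp x hg
        exact h2
    have hFd := harcsin.const_mul C
    refine hFd.congr_deriv ?_
    symm
    -- algebraic identity
    have hsq : (Real.sqrt s * q ^ x) ^ 2 = s * q ^ (2 * (x - 1 + 1)) := by
      rw [mul_pow, Real.sq_sqrt hs0, ← Real.rpow_natCast (q ^ x) 2, ← Real.rpow_mul hq0.le]
      congr 1
      push_cast
      ring
    have hpow : q ^ (x - 1) = q ^ x / q := by
      rw [Real.rpow_sub hq0, Real.rpow_one]
    unfold zeta
    rw [hC, ← hsq, hpow]
    have hDpos : 0 < Real.sqrt (1 - (Real.sqrt s * q ^ x) ^ 2) :=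
      Real.sqrt_pos.mpr (by nlinarith)
    set D := Real.sqrt (1 - (Real.sqrt s * q ^ x) ^ 2) with hDdef
    have hDne : D ≠ 0 := ne_of_gt hDpos
    field_simp [hq0.ne', hlogq.ne, hDne]
  -- continuity of F
  have hcont : Continuous F := by
    apply continuous_const.mul
    exact Real.continuous_arcsin.comp
      (continuous_const.mul (Continuous.rpow continuous_const continuous_id
        fun x => Or.inl hq0.ne'))
  -- key step : zeta q s k ≤ F k - F (k+1)
  have hkey : ∀ k : ℕ, zeta q s k ≤ F k - F (k + 1) := by
    intro k
    obtain ⟨c, hc, hceq⟩ := exists_hasDerivAt_eq_slope F (fun x => -(zeta q s (x - 1)))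
      (by linarith : (k:ℝ) < (k:ℝ) + 1) hcont.continuousOn
      (fun x hx => hderiv x (lt_of_le_of_lt (Nat.cast_nonneg k) hx.1))
    have h1 : -(zeta q s (c - 1)) = F ((k:ℝ) + 1) - F k := by
      rw [hceq]; ring_nf
    have h2 : F k - F ((k:ℝ) + 1) = zeta q s (c - 1) := by linarith
    rw [h2]
    exact hanti (c - 1) k (by have := hc.1; have := Nat.cast_nonneg (α := ℝ) k; linarith)
      (by linarith [hc.2])
  -- partial sums bounded
  have hF0 : F 0 = C * Real.arcsin (Real.sqrt s) := by
    simp [hF, Real.rpow_zero]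
  have hFnonneg : ∀ x : ℝ, 0 ≤ F x := by
    intro x
    exact mul_nonneg hCpos (Real.arcsin_nonneg.mpr
      (mul_nonneg (Real.sqrt_nonneg s) (Real.rpow_nonneg hq0.le x)))
  have hbound : ∀ n : ℕ, ∑ i ∈ Finset.range n, zeta q s i ≤ C * Real.arcsin (Real.sqrt s) := by
    intro n
    calc ∑ i ∈ Finset.range n, zeta q s i
        ≤ ∑ i ∈ Finset.range n, (F i - F (i + 1)) := by
          apply Finset.sum_le_sum
          intro i _
          have := hkey i
          push_cast
          push_cast at this
          exact this
      _ = F 0 - F n := by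
          have := Finset.sum_range_sub' (fun i : ℕ => F i) n
          simpa using this
      _ ≤ F 0 := by linarith [hFnonneg n]
      _ = C * Real.arcsin (Real.sqrt s) := hF0
  refine ⟨summable_of_sum_range_le (fun n => hzeta_nonneg n) hbound, ?_⟩
  exact Real.tsum_le_of_sum_range_le (fun n => hzeta_nonneg n) hbound
end

section
/- Let q ∈ (0,1) and s ∈ [0,1]. Then Σ_{k=0}^∞ ζ_{q,s}(k) = Σ_{k=0}^∞ (1−q²)·q^k·√s / √(1 − s·q^{2(k+1)}) ≥ −((1−q²)/(q·ln q)) · arcsin(√s·q). -/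
/-- For `q ∈ (0,1)` and `s ∈ [0,1]`, the sum of the (summable) series `Σ_{k=0}^∞ ζ_{q,s}(k)`
is at least `−((1−q²)/(q·ln q)) · arcsin(√s·q)`. -/
theorem stmt7 (q s : ℝ) (hq : q ∈ Set.Ioo (0 : ℝ) 1) (hs : s ∈ Set.Icc (0 : ℝ) 1) :
    Summable (fun k : ℕ => zeta q s k) ∧
    ∑' k : ℕ, zeta q s k ≥ -((1 - q ^ 2) / (q * Real.log q)) * Real.arcsin (Real.sqrt s * q) := by
  obtain ⟨hq0, hq1⟩ := hq
  obtain ⟨hs0, hs1⟩ := hs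
  have hlq : Real.log q < 0 := Real.log_neg hq0 hq1
  have hq2 : q ^ 2 < 1 := by nlinarith
  have hnum : (0:ℝ) < 1 - q ^ 2 := by linarith
  have hrpow2 : q ^ (2:ℝ) = q ^ 2 := by
    rw [show (2:ℝ) = ((2:ℕ):ℝ) by norm_num, Real.rpow_natCast]
  -- denominator bounds
  have hden : ∀ x : ℝ, 0 ≤ x → 1 - q ^ 2 ≤ 1 - s * q ^ (2 * (x + 1)) := by
    intro x hx
    have h1 : q ^ (2 * (x + 1)) ≤ q ^ (2:ℝ) :=
      Real.rpow_le_rpow_of_exponent_ge hq0 hq1.le (by linarith)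
    have h2 : s * q ^ (2 * (x + 1)) ≤ 1 * q ^ (2:ℝ) := by
      apply mul_le_mul hs1 h1 (Real.rpow_nonneg hq0.le _) zero_le_one
    rw [hrpow2] at h2
    linarith
  have hdenpos : ∀ x : ℝ, 0 ≤ x → 0 < Real.sqrt (1 - s * q ^ (2 * (x + 1))) := by
    intro x hx
    exact Real.sqrt_pos.mpr (lt_of_lt_of_le hnum (hden x hx))
  have hnumnonneg : ∀ x : ℝ, 0 ≤ (1 - q ^ 2) * q ^ x * Real.sqrt s := fun x => by
    positivity
  -- zeta nonneg
  have hz0 : ∀ x : ℝ, 0 ≤ x → 0 ≤ zeta q s x := fun x hx =>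
    div_nonneg (hnumnonneg x) (Real.sqrt_nonneg _)
  -- summability
  have hbound : ∀ k : ℕ,
      zeta q s k ≤ ((1 - q ^ 2) * Real.sqrt s / Real.sqrt (1 - q ^ 2)) * q ^ k := by
    intro k
    have hk0 : (0:ℝ) ≤ (k:ℝ) := Nat.cast_nonneg k
    have h1 : Real.sqrt (1 - q ^ 2) ≤ Real.sqrt (1 - s * q ^ (2 * ((k:ℝ) + 1))) :=
      Real.sqrt_le_sqrt (hden k hk0)
    have h2 : zeta q s k ≤ (1 - q ^ 2) * q ^ (k:ℝ) * Real.sqrt s / Real.sqrt (1 - q ^ 2) :=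
      div_le_div_of_nonneg_left (hnumnonneg k) (Real.sqrt_pos.mpr hnum) h1
    calc zeta q s k ≤ (1 - q ^ 2) * q ^ (k:ℝ) * Real.sqrt s / Real.sqrt (1 - q ^ 2) := h2
      _ = ((1 - q ^ 2) * Real.sqrt s / Real.sqrt (1 - q ^ 2)) * q ^ k := by
          rw [Real.rpow_natCast]; ring
  have hsum : Summable (fun k : ℕ => zeta q s k) :=
    Summable.of_nonneg_of_le (fun k => hz0 k (Nat.cast_nonneg k)) hbound
      ((summable_geometric_of_lt_one hq0.le hq1).mul_left _)
  refine ⟨hsum, ?_⟩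
  -- antitone
  have hant : AntitoneOn (zeta q s) (Set.Ici 0) := by
    intro x hx y hy hxy
    simp only [Set.mem_Ici] at hx hy
    unfold zeta
    apply div_le_div₀ (hnumnonneg x)
    · have h : q ^ y ≤ q ^ x := Real.rpow_le_rpow_of_exponent_ge hq0 hq1.le hxy
      exact mul_le_mul_of_nonneg_right
        (mul_le_mul_of_nonneg_left h (le_of_lt hnum)) (Real.sqrt_nonneg s)
    · exact hdenpos x hx
    · apply Real.sqrt_le_sqrt
      have h : q ^ (2 * (y + 1)) ≤ q ^ (2 * (x + 1)) :=
        Real.rpow_le_rpow_of_exponent_ge hq0 hq1.le (by linarith)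
      have := mul_le_mul_of_nonneg_left h hs0
      linarith
  -- the antiderivative
  set c : ℝ := (1 - q ^ 2) / (q * Real.log q) with hc
  set F : ℝ → ℝ := fun x => c * Real.arcsin (Real.sqrt s * q ^ (x + 1)) with hF
  have harg : ∀ x : ℝ, 0 ≤ x → Real.sqrt s * q ^ (x + 1) < 1 := by
    intro x hx
    have h1 : q ^ (x + 1) ≤ q ^ (1:ℝ) :=
      Real.rpow_le_rpow_of_exponent_ge hq0 hq1.le (by linarith)
    rw [Real.rpow_one] at h1
    have h2 : Real.sqrt s ≤ 1 := by
      rw [show (1:ℝ) = Real.sqrt 1 by simp]; exact Real.sqrt_le_sqrt hs1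
    nlinarith [Real.sqrt_nonneg s, Real.rpow_pos_of_pos hq0 (x+1)]
  have hargnn : ∀ x : ℝ, 0 ≤ Real.sqrt s * q ^ (x + 1) := fun x => by positivity
  have hderiv : ∀ x : ℝ, 0 ≤ x → HasDerivAt F (zeta q s x) x := by
    intro x hx
    have hg : HasDerivAt (fun x : ℝ => Real.sqrt s * q ^ (x + 1))
        (Real.sqrt s * (q ^ (x + 1) * Real.log q)) x := by
      have h1 : HasDerivAt (fun x : ℝ => q ^ (x : ℝ)) (q ^ (x+1) * Real.log q) (x + 1) :=
        (Real.hasStrictDerivAt_const_rpow hq0 (x+1)).hasDerivAt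
      have h2 : HasDerivAt (fun x : ℝ => x + 1) 1 x := (hasDerivAt_id x).add_const 1
      have := h1.comp x h2
      simpa using this.const_mul (Real.sqrt s)
    have hne1 : Real.sqrt s * q ^ (x + 1) ≠ -1 := by
      have := hargnn x; intro h; rw [h] at this; linarith
    have hne2 : Real.sqrt s * q ^ (x + 1) ≠ 1 := ne_of_lt (harg x hx)
    have harc := (Real.hasDerivAt_arcsin hne1 hne2).comp x hg
    have hfinal := harc.const_mul c
    refine hfinal.congr_deriv ?_; symm
    have hsq : (Real.sqrt s * q ^ (x + 1)) ^ 2 = s * q ^ (2 * (x + 1)) := by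
      rw [mul_pow, Real.sq_sqrt hs0]
      congr 1
      rw [show (2:ℝ) * (x+1) = (x+1) * (2:ℕ) by push_cast; ring,
        Real.rpow_mul hq0.le, Real.rpow_natCast]
    have hqx : q ^ (x + 1) = q ^ x * q := by
      rw [Real.rpow_add hq0, Real.rpow_one]
    unfold zeta
    rw [hsq, hqx, hc]
    have hD : Real.sqrt (1 - s * q ^ (2 * (x + 1))) ≠ 0 := ne_of_gt (hdenpos x hx)
    have hq0' : q ≠ 0 := ne_of_gt hq0
    have hlq' : Real.log q ≠ 0 := ne_of_lt hlq
    field_simp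
  -- integral identity and comparison
  have hint : ∀ n : ℕ, F n - F 0 ≤ ∑ i ∈ Finset.range n, zeta q s i := by
    intro n
    have huicc : Set.uIcc (0:ℝ) (0 + (n:ℝ)) = Set.Icc (0:ℝ) (n:ℝ) := by
      rw [Set.uIcc_of_le (by positivity), zero_add]
    have hInt : IntervalIntegrable (zeta q s) MeasureTheory.volume 0 (0 + (n:ℝ)) := by
      apply AntitoneOn.intervalIntegrable
      rw [huicc]
      exact hant.mono (Set.Icc_subset_Ici_self)
    have heq : ∫ x in (0:ℝ)..(0 + (n:ℝ)), zeta q s x = F (0 + n) - F 0 := by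
      apply intervalIntegral.integral_eq_sub_of_hasDerivAt
      · intro x hxm
        rw [huicc] at hxm
        exact hderiv x hxm.1
      · exact hInt
    have hle : ∫ x in (0:ℝ)..(0 + (n:ℝ)), zeta q s x ≤ ∑ i ∈ Finset.range n, zeta q s (0 + i) := by
      apply AntitoneOn.integral_le_sum
      rw [show (0:ℝ) + (n:ℕ) = (n:ℝ) by simp]
      exact hant.mono (Set.Icc_subset_Ici_self)
    simp only [zero_add] at heq hle
    linarith
  -- limits
  have htendA : Filter.Tendsto (fun n => ∑ i ∈ Finset.range n, zeta q s i)
      Filter.atTop (nhds (∑' k : ℕ, zeta q s k)) := hsum.hasSum.tendsto_sum_nat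
  have htendarg : Filter.Tendsto (fun n : ℕ => Real.sqrt s * q ^ ((n:ℝ) + 1))
      Filter.atTop (nhds 0) := by
    have h1 : Filter.Tendsto (fun n : ℕ => q ^ (n+1)) Filter.atTop (nhds 0) := by
      exact (tendsto_pow_atTop_nhds_zero_of_lt_one hq0.le hq1).comp (Filter.tendsto_add_atTop_nat 1)
    have h2 := h1.const_mul (Real.sqrt s)
    rw [mul_zero] at h2
    convert h2 using 2 with n
    rw [show ((n:ℝ) + 1) = ((n+1 : ℕ) : ℝ) by push_cast; ring, Real.rpow_natCast]
  have htendB : Filter.Tendsto (fun n : ℕ => F n - F 0) Filter.atTop (nhds (0 - F 0)) := by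
    apply Filter.Tendsto.sub_const
    have harc : Filter.Tendsto (fun n : ℕ => Real.arcsin (Real.sqrt s * q ^ ((n:ℝ) + 1)))
        Filter.atTop (nhds 0) := by
      have := (Real.continuous_arcsin.tendsto 0).comp htendarg
      simpa [Real.arcsin_zero, Function.comp_def] using this
    have := harc.const_mul c
    rw [mul_zero] at this
    exact this
  have hfin : 0 - F 0 ≤ ∑' k : ℕ, zeta q s k :=
    le_of_tendsto_of_tendsto' htendB htendA hint
  have hF0 : F 0 = c * Real.arcsin (Real.sqrt s * q) := by
    rw [hF]; simp [Real.rpow_one]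
  rw [hF0] at hfin
  rw [ge_iff_le]
  linarith
end

section
/- For every fixed s ∈ [0,1] one has lim_{q→1⁻} Σ_{k=0}^∞ (1−q²)·q^k·√s / √(1 − s·q^{2(k+1)}) = 2·arcsin(√s). -/
open Real Filter

private lemma zeta_nat (q s : ℝ) (k : ℕ) :
    zeta q s k = (1 - q ^ 2) * q ^ k * Real.sqrt s / Real.sqrt (1 - s * q ^ (2 * k + 2)) := by
  unfold zeta
  rw [show (2 * ((k : ℝ) + 1)) = ((2 * k + 2 : ℕ) : ℝ) by push_cast; ring,
    Real.rpow_natCast, Real.rpow_natCast]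

private lemma arcsin_sub_ge {a b : ℝ} (ha : 0 ≤ a) (hab : a ≤ b) (hb : b ≤ 1) :
    (b - a) / Real.sqrt (1 - a ^ 2) ≤ Real.arcsin b - Real.arcsin a := by
  rcases eq_or_lt_of_le hab with rfl | hab'
  · simp
  obtain ⟨c, hc, hsl⟩ := exists_hasDerivAt_eq_slope Real.arcsin
    (fun x => 1 / Real.sqrt (1 - x ^ 2)) hab' Real.continuous_arcsin.continuousOn
    (fun x hx => Real.hasDerivAt_arcsin
      (by have := hx.1; intro h; rw [h] at this; linarith)
      (ne_of_lt (lt_of_lt_of_le hx.2 hb)))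
  have hca : a < c := hc.1
  have hc1 : c < 1 := lt_of_lt_of_le hc.2 hb
  have hc0 : 0 < c := lt_of_le_of_lt ha hca
  have hpos : 0 < Real.sqrt (1 - c ^ 2) := Real.sqrt_pos.2 (by nlinarith)
  have heq : Real.arcsin b - Real.arcsin a = (b - a) / Real.sqrt (1 - c ^ 2) := by
    have hba : b - a ≠ 0 := sub_ne_zero.2 hab'.ne'
    field_simp at hsl ⊢
    linarith [hsl]
  have hss : Real.sqrt (1 - c ^ 2) ≤ Real.sqrt (1 - a ^ 2) := by
    apply Real.sqrt_le_sqrt; nlinarith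
  rw [heq]
  gcongr <;> linarith

private lemma arcsin_sub_le {a b : ℝ} (ha : 0 ≤ a) (hab : a ≤ b) (hb : b < 1) :
    Real.arcsin b - Real.arcsin a ≤ (b - a) / Real.sqrt (1 - b ^ 2) := by
  rcases eq_or_lt_of_le hab with rfl | hab'
  · simp
  obtain ⟨c, hc, hsl⟩ := exists_hasDerivAt_eq_slope Real.arcsin
    (fun x => 1 / Real.sqrt (1 - x ^ 2)) hab' Real.continuous_arcsin.continuousOn
    (fun x hx => Real.hasDerivAt_arcsin
      (by have := hx.1; intro h; rw [h] at this; linarith)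
      (ne_of_lt (lt_of_lt_of_le hx.2 hb.le)))
  have hca : a < c := hc.1
  have hcb : c < b := hc.2
  have hc0 : 0 < c := lt_of_le_of_lt ha hca
  have hposb : 0 < Real.sqrt (1 - b ^ 2) := Real.sqrt_pos.2 (by nlinarith)
  have hposc : 0 < Real.sqrt (1 - c ^ 2) := Real.sqrt_pos.2 (by nlinarith)
  have heq : Real.arcsin b - Real.arcsin a = (b - a) / Real.sqrt (1 - c ^ 2) := by
    have hba : b - a ≠ 0 := sub_ne_zero.2 hab'.ne'
    field_simp at hsl ⊢
    linarith [hsl]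
  have hss : Real.sqrt (1 - b ^ 2) ≤ Real.sqrt (1 - c ^ 2) := by
    apply Real.sqrt_le_sqrt; nlinarith
  rw [heq]
  gcongr <;> linarith

section Aux

variable {s q : ℝ} (hs0 : 0 ≤ s) (hs1 : s ≤ 1) (hq0 : 0 < q) (hq1 : q < 1)

include hs0 hs1 hq0 hq1

private lemma denom_pos (k : ℕ) : 0 < Real.sqrt (1 - s * q ^ (2 * k + 2)) := by
  apply Real.sqrt_pos.2
  have h1 : q ^ (2 * k + 2) ≤ q ^ 2 := pow_le_pow_of_le_one hq0.le hq1.le (by omega)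
  have h2 : s * q ^ (2 * k + 2) ≤ q ^ 2 := by
    calc s * q ^ (2 * k + 2) ≤ 1 * q ^ (2 * k + 2) :=
          mul_le_mul_of_nonneg_right hs1 (pow_nonneg hq0.le _)
      _ ≤ q ^ 2 := by rw [one_mul]; exact h1
  nlinarith

private lemma zeta_summable : Summable (fun k : ℕ => zeta q s k) := by
  have hgeo : Summable (fun k : ℕ =>
      ((1 - q ^ 2) * Real.sqrt s / Real.sqrt (1 - q ^ 2)) * q ^ k) :=
    (summable_geometric_of_lt_one hq0.le hq1).mul_left _
  refine Summable.of_nonneg_of_le ?_ ?_ hgeo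
  · intro k
    rw [zeta_nat]
    apply div_nonneg _ (Real.sqrt_nonneg _)
    have : 0 ≤ 1 - q ^ 2 := by nlinarith
    positivity
  · intro k
    rw [zeta_nat]
    have hD : Real.sqrt (1 - q ^ 2) ≤ Real.sqrt (1 - s * q ^ (2 * k + 2)) := by
      apply Real.sqrt_le_sqrt
      have h1 : q ^ (2 * k + 2) ≤ q ^ 2 := pow_le_pow_of_le_one hq0.le hq1.le (by omega)
      nlinarith [pow_nonneg hq0.le (2 * k + 2)]
    have hq2pos : (0:ℝ) < Real.sqrt (1 - q ^ 2) := Real.sqrt_pos.2 (by nlinarith)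
    have hnq : (0:ℝ) ≤ 1 - q ^ 2 := by nlinarith
    calc (1 - q ^ 2) * q ^ k * Real.sqrt s / Real.sqrt (1 - s * q ^ (2 * k + 2))
        ≤ (1 - q ^ 2) * q ^ k * Real.sqrt s / Real.sqrt (1 - q ^ 2) := by
          gcongr
      _ = (1 - q ^ 2) * Real.sqrt s / Real.sqrt (1 - q ^ 2) * q ^ k := by ring

omit hs0 hs1 in
private lemma telescope_hasSum (c : ℝ) (hc : 0 ≤ c) :
    HasSum (fun k : ℕ => Real.arcsin (c * q ^ k) - Real.arcsin (c * q ^ (k + 1)))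
      (Real.arcsin c) := by
  have hnn : ∀ k : ℕ, 0 ≤ Real.arcsin (c * q ^ k) - Real.arcsin (c * q ^ (k + 1)) := by
    intro k
    have : c * q ^ (k + 1) ≤ c * q ^ k :=
      mul_le_mul_of_nonneg_left (pow_le_pow_of_le_one hq0.le hq1.le (by omega)) hc
    linarith [Real.monotone_arcsin this]
  rw [hasSum_iff_tendsto_nat_of_nonneg hnn]
  have hps : ∀ n : ℕ, ∑ i ∈ Finset.range n,
      (Real.arcsin (c * q ^ i) - Real.arcsin (c * q ^ (i + 1)))
      = Real.arcsin (c * q ^ 0) - Real.arcsin (c * q ^ n) :=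
    fun n => Finset.sum_range_sub' (fun i => Real.arcsin (c * q ^ i)) n
  simp only [hps, pow_zero, mul_one]
  have h1 : Filter.Tendsto (fun n : ℕ => Real.arcsin (c * q ^ n)) atTop (nhds 0) := by
    have h2 : Filter.Tendsto (fun n : ℕ => c * q ^ n) atTop (nhds 0) := by
      simpa using (tendsto_pow_atTop_nhds_zero_of_lt_one hq0.le hq1).const_mul c
    have := (Real.continuous_arcsin.tendsto 0).comp h2
    simpa [Function.comp_def] using this
  simpa using tendsto_const_nhds.sub h1

private lemma sum_upper :
    ∑' k : ℕ, zeta q s k ≤ (1 + q) * Real.arcsin (Real.sqrt s) := by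
  set r := Real.sqrt s with hrdef
  have hr0 : 0 ≤ r := Real.sqrt_nonneg s
  have hr1 : r ≤ 1 := by
    rw [hrdef, show (1:ℝ) = Real.sqrt 1 by simp]
    exact Real.sqrt_le_sqrt hs1
  have hr2 : r ^ 2 = s := Real.sq_sqrt hs0
  have hkey := telescope_hasSum hq0 hq1 r hr0
  have hle : ∀ k : ℕ, zeta q s k ≤
      (1 + q) * (Real.arcsin (r * q ^ k) - Real.arcsin (r * q ^ (k + 1))) := by
    intro k
    have ha0 : 0 ≤ r * q ^ (k + 1) := by positivity
    have hab : r * q ^ (k + 1) ≤ r * q ^ k :=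
      mul_le_mul_of_nonneg_left (pow_le_pow_of_le_one hq0.le hq1.le (by omega)) hr0
    have hb1 : r * q ^ k ≤ 1 := by
      calc r * q ^ k ≤ 1 * 1 :=
            mul_le_mul hr1 (pow_le_one₀ hq0.le hq1.le) (pow_nonneg hq0.le k) (by norm_num)
        _ = 1 := by norm_num
    have h := arcsin_sub_ge ha0 hab hb1
    have hsq : (r * q ^ (k + 1)) ^ 2 = s * q ^ (2 * k + 2) := by
      rw [mul_pow, ← hr2]; ring
    rw [hsq] at h
    have h2 := mul_le_mul_of_nonneg_left h (by linarith : (0:ℝ) ≤ 1 + q)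
    refine le_trans (le_of_eq ?_) h2
    rw [zeta_nat]
    have hD := (denom_pos hs0 hs1 hq0 hq1 k).ne'
    field_simp
    ring
  have hsum2 := hkey.summable.mul_left (1 + q)
  have hts := Summable.tsum_le_tsum hle (zeta_summable hs0 hs1 hq0 hq1) hsum2
  rwa [tsum_mul_left, hkey.tsum_eq] at hts

private lemma sum_lower :
    (1 + q) / q * Real.arcsin (Real.sqrt s * q) ≤ ∑' k : ℕ, zeta q s k := by
  set r := Real.sqrt s with hrdef
  have hr0 : 0 ≤ r := Real.sqrt_nonneg s
  have hr1 : r ≤ 1 := by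
    rw [hrdef, show (1:ℝ) = Real.sqrt 1 by simp]
    exact Real.sqrt_le_sqrt hs1
  have hr2 : r ^ 2 = s := Real.sq_sqrt hs0
  have hkey := telescope_hasSum hq0 hq1 (r * q) (mul_nonneg hr0 hq0.le)
  have hle : ∀ k : ℕ,
      Real.arcsin ((r * q) * q ^ k) - Real.arcsin ((r * q) * q ^ (k + 1))
      ≤ (q / (1 + q)) * zeta q s k := by
    intro k
    have ha0 : 0 ≤ (r * q) * q ^ (k + 1) := by positivity
    have hab : (r * q) * q ^ (k + 1) ≤ (r * q) * q ^ k :=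
      mul_le_mul_of_nonneg_left (pow_le_pow_of_le_one hq0.le hq1.le (by omega))
        (mul_nonneg hr0 hq0.le)
    have hblt : (r * q) * q ^ k < 1 := by
      have hk1 : q ^ k ≤ 1 := pow_le_one₀ hq0.le hq1.le
      have hb' : r * q * q ^ k ≤ 1 * q * 1 :=
        mul_le_mul (mul_le_mul hr1 le_rfl hq0.le zero_le_one) hk1
          (pow_nonneg hq0.le k) (by linarith)
      calc r * q * q ^ k ≤ 1 * q * 1 := hb'
        _ < 1 := by linarith
    have h := arcsin_sub_le ha0 hab hblt
    have hbsq : ((r * q) * q ^ k) ^ 2 = s * q ^ (2 * k + 2) := by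
      rw [mul_pow, mul_pow, ← hr2]; ring
    rw [hbsq] at h
    refine le_trans h (le_of_eq ?_)
    rw [zeta_nat]
    have hD := (denom_pos hs0 hs1 hq0 hq1 k).ne'
    have hq1' : (1 : ℝ) + q ≠ 0 := by positivity
    field_simp
    ring
  have hsum2 := (zeta_summable hs0 hs1 hq0 hq1).mul_left (q / (1 + q))
  have hts := Summable.tsum_le_tsum hle hkey.summable hsum2
  rw [hkey.tsum_eq, tsum_mul_left] at hts
  have hfrac : (0:ℝ) ≤ (1 + q) / q := by positivity
  have h4 := mul_le_mul_of_nonneg_left hts hfrac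
  calc (1 + q) / q * Real.arcsin (r * q)
      ≤ (1 + q) / q * (q / (1 + q) * ∑' k : ℕ, zeta q s k) := h4
    _ = ∑' k : ℕ, zeta q s k := by
        field_simp

end Aux

/-- For every fixed `s ∈ [0,1]` one has
`Σ_{k=0}^∞ (1−q²)·q^k·√s / √(1 − s·q^{2(k+1)}) → 2·arcsin(√s)` as `q → 1⁻` on `(0,1)`. -/
theorem stmt10 (s : ℝ) (hs : s ∈ Set.Icc (0 : ℝ) 1) :
    Filter.Tendsto (fun q : ℝ => ∑' k : ℕ, zeta q s k)
      (nhdsWithin 1 (Set.Ioo (0 : ℝ) 1)) (nhds (2 * Real.arcsin (Real.sqrt s))) := by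
  obtain ⟨hs0, hs1⟩ := hs
  have hlowten : Filter.Tendsto (fun q : ℝ => (1 + q) / q * Real.arcsin (Real.sqrt s * q))
      (nhdsWithin 1 (Set.Ioo (0 : ℝ) 1)) (nhds (2 * Real.arcsin (Real.sqrt s))) := by
    have hc : ContinuousAt (fun q : ℝ => (1 + q) / q * Real.arcsin (Real.sqrt s * q)) 1 := by
      apply ContinuousAt.mul
      · exact (continuousAt_const.add continuousAt_id).div continuousAt_id one_ne_zero
      · exact Real.continuous_arcsin.continuousAt.comp (continuousAt_const.mul continuousAt_id)
    have := hc.tendsto.mono_left (nhdsWithin_le_nhds (s := Set.Ioo (0:ℝ) 1))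
    have h2 : (1 + 1) / 1 * Real.arcsin (Real.sqrt s * 1) = 2 * Real.arcsin (Real.sqrt s) := by
      norm_num
    rwa [h2] at this
  have huppten : Filter.Tendsto (fun q : ℝ => (1 + q) * Real.arcsin (Real.sqrt s))
      (nhdsWithin 1 (Set.Ioo (0 : ℝ) 1)) (nhds (2 * Real.arcsin (Real.sqrt s))) := by
    have hc : ContinuousAt (fun q : ℝ => (1 + q) * Real.arcsin (Real.sqrt s)) 1 :=
      (continuousAt_const.add continuousAt_id).mul continuousAt_const
    have := hc.tendsto.mono_left (nhdsWithin_le_nhds (s := Set.Ioo (0:ℝ) 1))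
    have h2 : ((1:ℝ) + 1) * Real.arcsin (Real.sqrt s) = 2 * Real.arcsin (Real.sqrt s) := by
      norm_num
    rwa [h2] at this
  apply tendsto_of_tendsto_of_tendsto_of_le_of_le' hlowten huppten
  · filter_upwards [self_mem_nhdsWithin] with q hq
    exact sum_lower hs0 hs1 hq.1 hq.2
  · filter_upwards [self_mem_nhdsWithin] with q hq
    exact sum_upper hs0 hs1 hq.1 hq.2
end

section
/- Let δ ∈ (0,1). The function f : [δ,1] × [0,1] → [0,∞) defined by f(q,s) := Σ_{k=0}^∞ (1−q²)·q^k·√s / √(1 − s·q^{2(k+1)}) for q ∈ [δ,1) and f(1,s) := 2·arcsin(√s) is continuous. -/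
/-- The function `f` defined by `f(q,s) := Σ_{k=0}^∞ ζ_{q,s}(k)` for `q ≠ 1` and
`f(1,s) := 2·arcsin(√s)`. -/
noncomputable def fFun (q s : ℝ) : ℝ :=
  if q = 1 then 2 * Real.arcsin (Real.sqrt s) else ∑' k : ℕ, zeta q s k

open Real Set Filter

namespace Stmt11Aux

lemma zeta_eq {q : ℝ} (hq : 0 < q) (s : ℝ) (k : ℕ) :
    zeta q s k = (1 - q ^ 2) * q ^ k * Real.sqrt s /
      Real.sqrt (1 - s * q ^ (2 * (k + 1))) := by
  have h1 : (q : ℝ) ^ ((k : ℝ)) = q ^ k := Real.rpow_natCast q k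
  have h2 : (q : ℝ) ^ (2 * ((k : ℝ) + 1)) = q ^ (2 * (k + 1)) := by
    rw [show (2 * ((k : ℝ) + 1)) = ((2 * (k + 1) : ℕ) : ℝ) by push_cast; ring,
      Real.rpow_natCast]
  rw [zeta, h1, h2]

lemma denom_lb {q s : ℝ} (hq0 : 0 ≤ q) (hq1 : q ≤ 1) (hs0 : 0 ≤ s) (hs1 : s ≤ 1) (k : ℕ) :
    1 - q ^ 2 ≤ 1 - s * q ^ (2 * (k + 1)) := by
  have h1 : q ^ (2 * (k + 1)) ≤ q ^ 2 := pow_le_pow_of_le_one hq0 hq1 (by omega)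
  have h2 : 0 ≤ q ^ (2 * (k + 1)) := pow_nonneg hq0 _
  nlinarith

lemma zeta_nonneg {q s : ℝ} (hq0 : 0 < q) (hq1 : q ≤ 1) (k : ℕ) :
    0 ≤ zeta q s k := by
  rw [zeta_eq hq0]
  have h1 : (0:ℝ) ≤ 1 - q ^ 2 := by nlinarith
  positivity

lemma zeta_le {q s : ℝ} (hq0 : 0 < q) (hq1 : q < 1) (hs0 : 0 ≤ s) (hs1 : s ≤ 1) (k : ℕ) :
    zeta q s k ≤ q ^ k := by
  rw [zeta_eq hq0]
  have hq2 : (0:ℝ) < 1 - q ^ 2 := by nlinarith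
  have hDpos : 0 < 1 - s * q ^ (2 * (k + 1)) :=
    lt_of_lt_of_le hq2 (denom_lb hq0.le hq1.le hs0 hs1 k)
  have hD : 0 < Real.sqrt (1 - s * q ^ (2 * (k + 1))) := Real.sqrt_pos.2 hDpos
  rw [div_le_iff₀ hD]
  have key : (1 - q ^ 2) * Real.sqrt s ≤ Real.sqrt (1 - s * q ^ (2 * (k + 1))) := by
    calc (1 - q ^ 2) * Real.sqrt s ≤ (1 - q ^ 2) * 1 := by
          exact mul_le_mul_of_nonneg_left (Real.sqrt_le_one.2 hs1) hq2.le
      _ = 1 - q ^ 2 := mul_one _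
      _ ≤ Real.sqrt (1 - q ^ 2) := by
          have h := Real.sqrt_le_sqrt (show ((1 - q ^ 2) ^ 2 : ℝ) ≤ 1 - q ^ 2 by nlinarith)
          rwa [Real.sqrt_sq hq2.le] at h
      _ ≤ Real.sqrt (1 - s * q ^ (2 * (k + 1))) :=
          Real.sqrt_le_sqrt (denom_lb hq0.le hq1.le hs0 hs1 k)
  calc (1 - q ^ 2) * q ^ k * Real.sqrt s = q ^ k * ((1 - q ^ 2) * Real.sqrt s) := by ring
    _ ≤ q ^ k * Real.sqrt (1 - s * q ^ (2 * (k + 1))) :=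
        mul_le_mul_of_nonneg_left key (pow_nonneg hq0.le _)

lemma zeta_summable {q s : ℝ} (hq0 : 0 < q) (hq1 : q < 1) (hs0 : 0 ≤ s) (hs1 : s ≤ 1) :
    Summable (fun k : ℕ => zeta q s k) :=
  Summable.of_nonneg_of_le (fun k => zeta_nonneg hq0 hq1.le k)
    (fun k => zeta_le hq0 hq1 hs0 hs1 k) (summable_geometric_of_lt_one hq0.le hq1)

/-- Telescoping sum of arcsin differences. -/
lemma arcsin_hasSum {q c : ℝ} (hq0 : 0 ≤ q) (hq1 : q < 1) (hc0 : 0 ≤ c) :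
    HasSum (fun k : ℕ => Real.arcsin (c * q ^ k) - Real.arcsin (c * q ^ (k + 1)))
      (Real.arcsin c) := by
  have hnn : ∀ k : ℕ, 0 ≤ Real.arcsin (c * q ^ k) - Real.arcsin (c * q ^ (k + 1)) := by
    intro k
    have h : c * q ^ (k + 1) ≤ c * q ^ k :=
      mul_le_mul_of_nonneg_left (pow_le_pow_of_le_one hq0 hq1.le (Nat.le_succ k)) hc0
    have := Real.monotone_arcsin h
    linarith
  rw [hasSum_iff_tendsto_nat_of_nonneg hnn]
  have htel : ∀ n : ℕ, (∑ i ∈ Finset.range n,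
      (Real.arcsin (c * q ^ i) - Real.arcsin (c * q ^ (i + 1))))
      = Real.arcsin c - Real.arcsin (c * q ^ n) := by
    intro n
    rw [Finset.sum_range_sub' (fun k => Real.arcsin (c * q ^ k)) n]
    simp
  simp only [htel]
  have h2 : Tendsto (fun n : ℕ => Real.arcsin (c * q ^ n)) atTop (nhds 0) := by
    have hpow := tendsto_pow_atTop_nhds_zero_of_lt_one hq0 hq1
    have hmul : Tendsto (fun n : ℕ => c * q ^ n) atTop (nhds 0) := by
      simpa using hpow.const_mul c
    have := (Real.continuous_arcsin.tendsto 0).comp hmul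
    simpa [Function.comp_def] using this
  simpa using tendsto_const_nhds.sub h2

/-- Lower MVT bound for the arcsin increment. -/
lemma delta_ge {q c : ℝ} (hq0 : 0 < q) (hq1 : q < 1) (hc0 : 0 ≤ c) (hc1 : c ≤ 1) (k : ℕ) :
    c * q ^ k * (1 - q) / Real.sqrt (1 - c ^ 2 * q ^ (2 * (k + 1))) ≤
      Real.arcsin (c * q ^ k) - Real.arcsin (c * q ^ (k + 1)) := by
  rcases eq_or_lt_of_le hc0 with h | hc0'
  · simp [← h]
  set a := c * q ^ (k + 1) with ha
  set b := c * q ^ k with hb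
  have hab : a < b :=
    mul_lt_mul_of_pos_left (pow_lt_pow_right_of_lt_one₀ hq0 hq1 (lt_add_one k)) hc0'
  have ha0 : 0 ≤ a := mul_nonneg hc0 (pow_nonneg hq0.le _)
  have hb1 : b ≤ 1 := by
    have : q ^ k ≤ 1 := pow_le_one₀ hq0.le hq1.le
    nlinarith
  obtain ⟨ξ, hξ, hslope⟩ := exists_hasDerivAt_eq_slope Real.arcsin
    (fun x => 1 / Real.sqrt (1 - x ^ 2)) hab Real.continuous_arcsin.continuousOn
    (fun x hx => Real.hasDerivAt_arcsin
      (ne_of_gt (show x > -1 by linarith [hx.1]))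
      (ne_of_lt (lt_of_lt_of_le hx.2 hb1)))
  have hξ0 : 0 < ξ := lt_of_le_of_lt ha0 hξ.1
  have hξ1 : ξ < 1 := lt_of_lt_of_le hξ.2 hb1
  have hsx : 0 < Real.sqrt (1 - ξ ^ 2) := Real.sqrt_pos.2 (by nlinarith)
  have heq : Real.arcsin b - Real.arcsin a = (b - a) / Real.sqrt (1 - ξ ^ 2) := by
    rw [eq_div_iff (ne_of_gt hsx)]
    have h := hslope
    rw [div_eq_div_iff (ne_of_gt hsx) (ne_of_gt (sub_pos.2 hab))] at h
    linarith [h]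
  have ha2 : c ^ 2 * q ^ (2 * (k + 1)) = a ^ 2 := by rw [ha]; ring
  have hcmp : Real.sqrt (1 - ξ ^ 2) ≤ Real.sqrt (1 - a ^ 2) :=
    Real.sqrt_le_sqrt (by nlinarith [hξ.1])
  have hba : b - a = c * q ^ k * (1 - q) := by rw [ha, hb]; ring
  have hba0 : 0 ≤ b - a := le_of_lt (by linarith)
  rw [ha2, heq, ← hba]
  exact div_le_div_of_nonneg_left hba0 hsx hcmp

/-- Upper MVT bound for the arcsin increment, valid when `c q^k < 1`. -/
lemma delta_le {q c : ℝ} (hq0 : 0 < q) (hq1 : q < 1) (hc0 : 0 ≤ c) (k : ℕ)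
    (hlt : c * q ^ k < 1) :
    Real.arcsin (c * q ^ k) - Real.arcsin (c * q ^ (k + 1)) ≤
      c * q ^ k * (1 - q) / Real.sqrt (1 - c ^ 2 * q ^ (2 * k)) := by
  rcases eq_or_lt_of_le hc0 with h | hc0'
  · simp [← h]
  set a := c * q ^ (k + 1) with ha
  set b := c * q ^ k with hb
  have hab : a < b :=
    mul_lt_mul_of_pos_left (pow_lt_pow_right_of_lt_one₀ hq0 hq1 (lt_add_one k)) hc0'
  have ha0 : 0 ≤ a := mul_nonneg hc0 (pow_nonneg hq0.le _)
  have hb1 : b < 1 := hlt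
  obtain ⟨ξ, hξ, hslope⟩ := exists_hasDerivAt_eq_slope Real.arcsin
    (fun x => 1 / Real.sqrt (1 - x ^ 2)) hab Real.continuous_arcsin.continuousOn
    (fun x hx => Real.hasDerivAt_arcsin
      (ne_of_gt (show x > -1 by linarith [hx.1]))
      (ne_of_lt (lt_trans hx.2 hb1)))
  have hξ0 : 0 < ξ := lt_of_le_of_lt ha0 hξ.1
  have hξ1 : ξ < 1 := lt_trans hξ.2 hb1
  have hsx : 0 < Real.sqrt (1 - ξ ^ 2) := Real.sqrt_pos.2 (by nlinarith)
  have hsb : 0 < Real.sqrt (1 - b ^ 2) := Real.sqrt_pos.2 (by nlinarith)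
  have heq : Real.arcsin b - Real.arcsin a = (b - a) / Real.sqrt (1 - ξ ^ 2) := by
    rw [eq_div_iff (ne_of_gt hsx)]
    have h := hslope
    rw [div_eq_div_iff (ne_of_gt hsx) (ne_of_gt (sub_pos.2 hab))] at h
    linarith [h]
  have hb2 : c ^ 2 * q ^ (2 * k) = b ^ 2 := by rw [hb]; ring
  have hcmp : Real.sqrt (1 - b ^ 2) ≤ Real.sqrt (1 - ξ ^ 2) :=
    Real.sqrt_le_sqrt (by nlinarith [hξ.2, hξ0])
  have hba : b - a = c * q ^ k * (1 - q) := by rw [ha, hb]; ring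
  have hba0 : 0 ≤ b - a := le_of_lt (by linarith)
  rw [hb2, heq, ← hba]
  exact div_le_div_of_nonneg_left hba0 hsb hcmp

/-- Monotonicity lemma: `arcsin x - arcsin (x q) ≤ π/2 - arcsin q`. -/
lemma arcsin_gap_le {q x : ℝ} (hq0 : 0 ≤ q) (hq1 : q ≤ 1) (hx0 : 0 ≤ x) (hx1 : x ≤ 1) :
    Real.arcsin x - Real.arcsin (x * q) ≤ π / 2 - Real.arcsin q := by
  have hF : ∀ y ∈ Ioo (0:ℝ) 1, HasDerivAt (fun y => Real.arcsin y - Real.arcsin (y * q))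
      (1 / Real.sqrt (1 - y ^ 2) - 1 / Real.sqrt (1 - (y * q) ^ 2) * q) y := by
    intro y hy
    have h1 : HasDerivAt Real.arcsin (1 / Real.sqrt (1 - y ^ 2)) y :=
      Real.hasDerivAt_arcsin (ne_of_gt (show y > -1 by linarith [hy.1]))
        (ne_of_lt hy.2)
    have hyq1 : y * q < 1 := by nlinarith [hy.1, hy.2]
    have hyq0 : 0 ≤ y * q := mul_nonneg hy.1.le hq0
    have h2 : HasDerivAt (fun y => Real.arcsin (y * q))
        (1 / Real.sqrt (1 - (y * q) ^ 2) * q) y := by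
      have hinner : HasDerivAt (fun y : ℝ => y * q) q y := by
        simpa using (hasDerivAt_id y).mul_const q
      exact (Real.hasDerivAt_arcsin
        (ne_of_gt (show y * q > -1 by linarith)) (ne_of_lt hyq1)).comp y hinner
    exact h1.sub h2
  have hderiv_nonneg : ∀ y ∈ Ioo (0:ℝ) 1,
      0 ≤ 1 / Real.sqrt (1 - y ^ 2) - 1 / Real.sqrt (1 - (y * q) ^ 2) * q := by
    intro y hy
    have hP : 0 < Real.sqrt (1 - y ^ 2) := Real.sqrt_pos.2 (by nlinarith [hy.1, hy.2])
    have hyq1 : y * q < 1 := by nlinarith [hy.1, hy.2]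
    have hyq0 : 0 ≤ y * q := mul_nonneg hy.1.le hq0
    have hQ : 0 < Real.sqrt (1 - (y * q) ^ 2) := Real.sqrt_pos.2 (by nlinarith)
    have hkey : q * Real.sqrt (1 - y ^ 2) ≤ Real.sqrt (1 - (y * q) ^ 2) := by
      have hq2 : q * Real.sqrt (1 - y ^ 2) = Real.sqrt (q ^ 2 * (1 - y ^ 2)) := by
        rw [Real.sqrt_mul (sq_nonneg q), Real.sqrt_sq hq0]
      rw [hq2]
      exact Real.sqrt_le_sqrt (by nlinarith [hy.1, hy.2])
    rw [sub_nonneg, mul_comm (1 / Real.sqrt (1 - (y * q) ^ 2)) q, mul_one_div,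
      div_le_div_iff₀ hQ hP]
    calc q * Real.sqrt (1 - y ^ 2) ≤ Real.sqrt (1 - (y * q) ^ 2) := hkey
      _ = 1 * Real.sqrt (1 - (y * q) ^ 2) := (one_mul _).symm
  have hmono : MonotoneOn (fun y => Real.arcsin y - Real.arcsin (y * q)) (Icc (0:ℝ) 1) := by
    apply monotoneOn_of_deriv_nonneg (convex_Icc 0 1)
    · exact (Real.continuous_arcsin.sub
        (Real.continuous_arcsin.comp (continuous_id.mul continuous_const))).continuousOn
    · rw [interior_Icc]
      exact fun y hy => (hF y hy).differentiableAt.differentiableWithinAt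
    · rw [interior_Icc]
      intro y hy
      rw [(hF y hy).deriv]
      exact hderiv_nonneg y hy
  have := hmono ⟨hx0, hx1⟩ ⟨zero_le_one, le_refl _⟩ hx1
  simpa [Real.arcsin_one] using this

noncomputable def Efun (δ q : ℝ) : ℝ := (2 / δ) * (π / 2 - Real.arcsin q)

lemma Efun_nonneg {δ q : ℝ} (hδ : 0 < δ) : 0 ≤ Efun δ q := by
  have := Real.arcsin_le_pi_div_two q
  have h2 : (0:ℝ) ≤ 2 / δ := by positivity
  unfold Efun
  nlinarith

lemma key_bound {δ q s : ℝ} (hδ0 : 0 < δ) (hq : q ∈ Icc δ 1) (hs : s ∈ Icc (0:ℝ) 1) :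
    |fFun q s - 2 * Real.arcsin (Real.sqrt s)| ≤ Efun δ q := by
  rcases eq_or_lt_of_le hq.2 with h | hq1
  · subst h
    have hv : fFun 1 s = 2 * Real.arcsin (Real.sqrt s) := by
      unfold fFun
      rw [if_pos rfl]
    rw [hv, sub_self, abs_zero]
    exact Efun_nonneg hδ0
  -- now q < 1
  have hq0 : 0 < q := lt_of_lt_of_le hδ0 hq.1
  set c := Real.sqrt s with hc
  have hc0 : 0 ≤ c := Real.sqrt_nonneg s
  have hc1 : c ≤ 1 := Real.sqrt_le_one.2 hs.2
  have hcs : c ^ 2 = s := Real.sq_sqrt hs.1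
  set w : ℕ → ℝ := fun k => c * q ^ k * (1 - q) / Real.sqrt (1 - c ^ 2 * q ^ (2 * (k + 1)))
    with hw
  have hzw : ∀ k : ℕ, zeta q s k = (1 + q) * w k := by
    intro k
    rw [zeta_eq hq0]
    simp only [hw]
    rw [← hcs, Real.sqrt_sq hc0]
    ring
  have hw_nonneg : ∀ k, 0 ≤ w k := by
    intro k
    apply div_nonneg _ (Real.sqrt_nonneg _)
    have : (0:ℝ) ≤ 1 - q := by linarith
    positivity
  have hsum_zeta : Summable (fun k : ℕ => zeta q s k) :=
    zeta_summable hq0 hq1 hs.1 hs.2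
  have hw_summ : Summable w := by
    have h1q : (1 + q : ℝ) ≠ 0 := by positivity
    have heq : (fun k : ℕ => (1 + q) * w k) = fun k : ℕ => zeta q s k :=
      funext fun k => (hzw k).symm
    have h2 : Summable (fun k : ℕ => (1 + q) * w k) := by rw [heq]; exact hsum_zeta
    exact (summable_mul_left_iff h1q).mp h2
  set Δ : ℕ → ℝ := fun k => Real.arcsin (c * q ^ k) - Real.arcsin (c * q ^ (k + 1)) with hΔdef
  have hΔ : HasSum Δ (Real.arcsin c) := arcsin_hasSum hq0.le hq1 hc0
  -- upper bound for W
  have hW_le : ∑' k, w k ≤ Real.arcsin c := by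
    have h := Summable.tsum_le_tsum (fun k => delta_ge hq0 hq1 hc0 hc1 k) hw_summ hΔ.summable
    rwa [hΔ.tsum_eq] at h
  -- lower bound for W
  have hΔ' : HasSum (fun k => Δ (k + 1)) (Real.arcsin c - Δ 0) := by
    rw [hasSum_nat_add_iff (f := Δ) 1]
    simpa using hΔ
  have hΔq : HasSum (fun k => (1 / q) * Δ (k + 1)) ((1 / q) * (Real.arcsin c - Δ 0)) :=
    hΔ'.mul_left _
  have hterm : ∀ k : ℕ, (1 / q) * Δ (k + 1) ≤ w k := by
    intro k
    have hlt : c * q ^ (k + 1) < 1 := by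
      have h1 : q ^ (k + 1) ≤ q := by
        calc q ^ (k + 1) ≤ q ^ 1 := pow_le_pow_of_le_one hq0.le hq1.le (by omega)
          _ = q := pow_one q
      nlinarith
    have h := delta_le hq0 hq1 hc0 (k + 1) hlt
    simp only [hΔdef]
    rw [one_div, inv_mul_le_iff₀ hq0]
    simp only [hw]
    have hrw : q * (c * q ^ k * (1 - q) / Real.sqrt (1 - c ^ 2 * q ^ (2 * (k + 1))))
        = c * q ^ (k + 1) * (1 - q) / Real.sqrt (1 - c ^ 2 * q ^ (2 * (k + 1))) := by
      rw [pow_succ]; ring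
    rw [hrw]
    exact h
  have hW_ge : (1 / q) * (Real.arcsin c - Δ 0) ≤ ∑' k, w k := by
    have h := Summable.tsum_le_tsum hterm hΔq.summable hw_summ
    rwa [hΔq.tsum_eq] at h
  have hΔ0 : Δ 0 ≤ π / 2 - Real.arcsin q := by
    have := arcsin_gap_le hq0.le hq1.le hc0 hc1
    simpa [hΔdef] using this
  have hΔ0' : 0 ≤ Δ 0 := by
    have h : c * q ^ 1 ≤ c * q ^ 0 :=
      mul_le_mul_of_nonneg_left (pow_le_pow_of_le_one hq0.le hq1.le (by omega)) hc0
    have := Real.monotone_arcsin h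
    simp only [hΔdef]
    linarith
  have hT : fFun q s = (1 + q) * ∑' k, w k := by
    unfold fFun
    rw [if_neg (ne_of_lt hq1), tsum_congr hzw, tsum_mul_left]
  have harc0 : 0 ≤ Real.arcsin c := Real.arcsin_nonneg.2 hc0
  have harc2 : Real.arcsin c ≤ π / 2 := Real.arcsin_le_pi_div_two c
  have hW0 : 0 ≤ ∑' k, w k := tsum_nonneg hw_nonneg
  set W := ∑' k, w k with hWdef
  set D := π / 2 - Real.arcsin q with hDdef
  have hD0 : 0 ≤ D := by
    have := Real.arcsin_le_pi_div_two q
    rw [hDdef]; linarith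
  rw [hT, abs_le]
  constructor
  · -- lower: -(2/δ)*D ≤ (1+q)W - 2 arcsin c
    have hqW : Real.arcsin c - D ≤ q * W := by
      have h1 : Real.arcsin c - Δ 0 ≤ q * W := by
        rw [one_div] at hW_ge
        calc Real.arcsin c - Δ 0 = q * (q⁻¹ * (Real.arcsin c - Δ 0)) := by
              field_simp
          _ ≤ q * W := mul_le_mul_of_nonneg_left hW_ge hq0.le
      linarith
    have step : 2 * Real.arcsin c - (1 + q) * W ≤ 2 / q * D := by
      rw [div_mul_eq_mul_div, le_div_iff₀ hq0]
      nlinarith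
    have step2 : 2 / q * D ≤ 2 / δ * D :=
      mul_le_mul_of_nonneg_right (div_le_div_of_nonneg_left (by norm_num) hδ0 hq.1) hD0
    rw [Efun]
    rw [← hDdef]
    linarith
  · -- upper
    have h1 : (1 + q) * W ≤ (1 + q) * Real.arcsin c :=
      mul_le_mul_of_nonneg_left hW_le (by linarith)
    have h2 : (1 + q) * Real.arcsin c ≤ 2 * Real.arcsin c := by nlinarith
    have := Efun_nonneg (q := q) hδ0
    rw [Efun] at this ⊢
    rw [← hDdef] at this ⊢
    linarith

lemma contOn_away {δ q' : ℝ} (hδ0 : 0 < δ) (hq'0 : 0 < q') (hq'1 : q' < 1) :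
    ContinuousOn (fun p : ℝ × ℝ => ∑' k : ℕ, zeta p.1 p.2 k)
      (Icc δ q' ×ˢ Icc (0:ℝ) 1) := by
  have hset : ∀ p : ℝ × ℝ, p ∈ Icc δ q' ×ˢ Icc (0:ℝ) 1 →
      0 < p.1 ∧ p.1 ≤ q' ∧ 0 ≤ p.2 ∧ p.2 ≤ 1 := by
    rintro p ⟨⟨h1, h2⟩, ⟨h3, h4⟩⟩
    exact ⟨lt_of_lt_of_le hδ0 h1, h2, h3, h4⟩
  apply continuousOn_tsum (u := fun k : ℕ => q' ^ k)
  · intro k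
    have hcont : ContinuousOn (fun p : ℝ × ℝ =>
        (1 - p.1 ^ 2) * p.1 ^ k * Real.sqrt p.2 /
          Real.sqrt (1 - p.2 * p.1 ^ (2 * (k + 1)))) (Icc δ q' ×ˢ Icc (0:ℝ) 1) := by
      apply ContinuousOn.div
      · exact (((continuous_const.sub ((continuous_pow 2).comp continuous_fst)).mul
          ((continuous_pow k).comp continuous_fst)).mul
          (Real.continuous_sqrt.comp continuous_snd)).continuousOn
      · exact (Real.continuous_sqrt.comp (continuous_const.sub
          (continuous_snd.mul ((continuous_pow (2 * (k + 1))).comp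
            continuous_fst)))).continuousOn
      · intro p hp
        obtain ⟨hp0, hp1, hp2, hp3⟩ := hset p hp
        have h1 : (0:ℝ) < 1 - q' ^ 2 := by nlinarith
        have h2 : 1 - q' ^ 2 ≤ 1 - p.2 * p.1 ^ (2 * (k + 1)) := by
          have := denom_lb hp0.le (le_trans hp1 hq'1.le) hp2 hp3 k
          have hpow : p.1 ^ 2 ≤ q' ^ 2 := pow_le_pow_left₀ hp0.le hp1 2
          nlinarith
        exact ne_of_gt (Real.sqrt_pos.2 (lt_of_lt_of_le h1 h2))
    apply hcont.congr
    intro p hp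
    obtain ⟨hp0, _, _, _⟩ := hset p hp
    exact zeta_eq hp0 p.2 k
  · exact summable_geometric_of_lt_one hq'0.le hq'1
  · intro k p hp
    obtain ⟨hp0, hp1, hp2, hp3⟩ := hset p hp
    have hq1 : p.1 < 1 := lt_of_le_of_lt hp1 hq'1
    rw [Real.norm_eq_abs, abs_of_nonneg (zeta_nonneg hp0 hq1.le k)]
    calc zeta p.1 p.2 k ≤ p.1 ^ k := zeta_le hp0 hq1 hp2 hp3 k
      _ ≤ q' ^ k := pow_le_pow_left₀ hp0.le hp1 k

end Stmt11Aux

/-- For `δ ∈ (0,1)`, the function `f : [δ,1] × [0,1] → [0,∞)` given by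
`f(q,s) = Σ_{k=0}^∞ (1−q²)·q^k·√s / √(1 − s·q^{2(k+1)})` for `q ∈ [δ,1)` and
`f(1,s) = 2·arcsin(√s)` is continuous. -/
theorem stmt11 (δ : ℝ) (hδ : δ ∈ Set.Ioo (0 : ℝ) 1) :
    ContinuousOn (fun p : ℝ × ℝ => fFun p.1 p.2)
      (Set.Icc δ 1 ×ˢ Set.Icc (0 : ℝ) 1) := by
  obtain ⟨hδ0, hδ1⟩ := hδ
  set S := Set.Icc δ 1 ×ˢ Set.Icc (0:ℝ) 1 with hS
  rintro ⟨q₀, s₀⟩ ⟨hq₀, hs₀⟩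
  rcases eq_or_lt_of_le hq₀.2 with h1 | h1
  · -- q₀ = 1
    have hcont2 : ContinuousWithinAt (fun p : ℝ × ℝ => 2 * Real.arcsin (Real.sqrt p.2))
        S (q₀, s₀) :=
      ((continuous_const.mul (Real.continuous_arcsin.comp
        (Real.continuous_sqrt.comp continuous_snd))).continuousWithinAt)
    have hsq : Tendsto (fun p : ℝ × ℝ => fFun p.1 p.2 - 2 * Real.arcsin (Real.sqrt p.2))
        (nhdsWithin (q₀, s₀) S) (nhds 0) := by
      apply squeeze_zero_norm' (a := fun p : ℝ × ℝ => Stmt11Aux.Efun δ p.1)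
      · filter_upwards [self_mem_nhdsWithin] with p hp
        obtain ⟨hp1, hp2⟩ := hp
        rw [Real.norm_eq_abs]
        exact Stmt11Aux.key_bound hδ0 hp1 hp2
      · have hE : Continuous (fun p : ℝ × ℝ => Stmt11Aux.Efun δ p.1) := by
          unfold Stmt11Aux.Efun
          exact continuous_const.mul (continuous_const.sub
            (Real.continuous_arcsin.comp continuous_fst))
        have hEt : Tendsto (fun p : ℝ × ℝ => Stmt11Aux.Efun δ p.1)
            (nhdsWithin (q₀, s₀) S) (nhds (Stmt11Aux.Efun δ q₀)) :=
          ((hE.tendsto (q₀, s₀)).mono_left nhdsWithin_le_nhds : _)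
        have hq1' : q₀ = 1 := h1
        simpa [Stmt11Aux.Efun, hq1', Real.arcsin_one] using hEt
    have hfin := hsq.add hcont2
    simp only [sub_add_cancel, zero_add] at hfin
    have hval : fFun q₀ s₀ = 2 * Real.arcsin (Real.sqrt s₀) := by
      have hq1' : q₀ = 1 := h1
      unfold fFun
      rw [if_pos hq1']
    show Tendsto (fun p : ℝ × ℝ => fFun p.1 p.2) (nhdsWithin (q₀, s₀) S)
      (nhds (fFun q₀ s₀))
    rw [hval]
    exact hfin
  · -- q₀ < 1
    set q' := (1 + q₀) / 2 with hq'
    have hq'0 : 0 < q' := by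
      have : 0 < q₀ := lt_of_lt_of_le hδ0 hq₀.1
      rw [hq']; linarith
    have hq'1 : q' < 1 := by rw [hq']; linarith
    have hq₀q' : q₀ < q' := by rw [hq']; linarith
    set S' := Set.Icc δ q' ×ˢ Set.Icc (0:ℝ) 1 with hS'
    have hC : ContinuousOn (fun p : ℝ × ℝ => fFun p.1 p.2) S' := by
      apply (Stmt11Aux.contOn_away hδ0 hq'0 hq'1).congr
      rintro p ⟨hp1, _⟩
      show fFun p.1 p.2 = _
      unfold fFun
      rw [if_neg (ne_of_lt (lt_of_le_of_lt hp1.2 hq'1))]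
    have hx' : (q₀, s₀) ∈ S' := ⟨⟨hq₀.1, hq₀q'.le⟩, hs₀⟩
    apply (hC (q₀, s₀) hx').mono_of_mem_nhdsWithin
    rw [mem_nhdsWithin]
    refine ⟨{p : ℝ × ℝ | p.1 < q'}, isOpen_lt continuous_fst continuous_const, hq₀q', ?_⟩
    rintro p ⟨hpv, hp1, hp2⟩
    exact ⟨⟨hp1.1, hpv.le⟩, hp2⟩
end
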